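/- Let q be a prime, S a set of primes not containing q, and let M = Z[ r·x : r ∈ Z_⟨S⟩ ] be the subring of the polynomial ring Q[x] consisting of polynomials with coefficients in Z_⟨S⟩ whose constant coefficient is an integer. Then there is no b ∈ M and integer r with 0 ≤ r < q such that x = b·q + r. In particular M does not satisfy Euclidean division by q. -/

import Mathlib

/-- Let `q` be a prime, `S` a set of primes not containing `q`, and let `M` be
the subring of `ℚ[x]` of polynomials all of whose coefficients lie in
`ℤ_⟨S⟩ = { a/k : a ∈ ℤ, k ∈ ⟨S⟩ }` and whose constant coefficient is an integer.
Then there is no `b ∈ M` and integer `r` with `0 ≤ r < q` such that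
`x = b * q + r`: i.e. `M` does not satisfy Euclidean division by `q`. -/
theorem stmt12 (S : Set ℕ) (hS : ∀ p ∈ S, Nat.Prime p)
    (q : ℕ) (hq : Nat.Prime q) (hqS : q ∉ S) :
    ¬ ∃ (b : Polynomial ℚ) (r : ℤ),
        (∀ i : ℕ, ∃ (a : ℤ) (k : ℕ), k ∈ Submonoid.closure S ∧
            b.coeff i = (a : ℚ) / (k : ℚ)) ∧
        (∃ m : ℤ, b.coeff 0 = (m : ℚ)) ∧
        0 ≤ r ∧ r < (q : ℤ) ∧
        (Polynomial.X : Polynomial ℚ) = b * (q : Polynomial ℚ) + (r : Polynomial ℚ) := by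
  rintro ⟨b, r, hcoef, -, -, -, heq⟩
  -- members of the closure of S are not divisible by q
  have hnd : ∀ k ∈ Submonoid.closure S, ¬ q ∣ k := by
    intro k hk
    induction hk using Submonoid.closure_induction with
    | mem p hp =>
      intro hd
      exact hqS (((Nat.prime_dvd_prime_iff_eq hq (hS p hp)).mp hd) ▸ hp)
    | one =>
      exact fun hd => hq.ne_one (Nat.eq_one_of_dvd_one hd)
    | mul a c _ _ ha hc =>
      intro hd
      rcases (Nat.Prime.dvd_mul hq).mp hd with h | h
      exacts [ha h, hc h]
  -- compare coefficient 1
  have h1 : (1 : ℚ) = b.coeff 1 * q := by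
    have := congrArg (fun p => Polynomial.coeff p 1) heq
    have hr1 : ((r : ℤ) : Polynomial ℚ).coeff 1 = 0 := by
      rw [← Polynomial.C_eq_intCast, Polynomial.coeff_C]
      simp
    simpa [hr1] using this
  obtain ⟨a, k, hk, hbk⟩ := hcoef 1
  have hk0 : (k : ℚ) ≠ 0 := by
    intro h0
    rw [hbk, h0, div_zero, zero_mul] at h1
    exact one_ne_zero h1
  -- from 1 = (a/k) * q, get k = a * q
  have hkaq : (k : ℚ) = (a : ℚ) * q := by
    rw [hbk, div_mul_eq_mul_div, eq_div_iff hk0] at h1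
    linarith [h1]
  have hkaq' : (k : ℤ) = a * q := by exact_mod_cast hkaq
  have : (q : ℤ) ∣ (k : ℤ) := ⟨a, by linarith [hkaq']⟩
  exact hnd k hk (Int.ofNat_dvd.mp (by exact_mod_cast this))
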